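/- If p ∈ 𝒫_n and deg p > n, then the last n coefficients of p, namely a_{m-n+1}, ..., a_{m-1}, a_m where m = deg p, are all nonnegative. -/

import Mathlib

open Polynomial Matrix
open Fin.NatCast

/-- `Pn n p` means the real polynomial `p` preserves entrywise nonnegativity of all
`n`-by-`n` nonnegative real matrices. -/
def Pn (n : ℕ) (p : Polynomial ℝ) : Prop :=
  ∀ A : Matrix (Fin n) (Fin n) ℝ, (∀ i j, 0 ≤ A i j) →
    ∀ i j, 0 ≤ ((Polynomial.aeval A) p) i j

/-- The `r mod n`-part of a real polynomial. -/
noncomputable def rpart (p : Polynomial ℝ) (n r : ℕ) : Polynomial ℝ :=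
  ∑ j ∈ Finset.range (p.natDegree + 1),
    if j % n = r then Polynomial.C (p.coeff j) * Polynomial.X ^ j else 0

private lemma rpart_coeff (p : Polynomial ℝ) (n r i : ℕ) :
    (rpart p n r).coeff i = if i % n = r then p.coeff i else 0 := by
  unfold rpart
  rw [Polynomial.finset_sum_coeff]
  have h : ∀ j ∈ Finset.range (p.natDegree + 1),
      (if j % n = r then Polynomial.C (p.coeff j) * Polynomial.X ^ j else 0).coeff i
      = if j = i then (if i % n = r then p.coeff i else 0) else 0 := by
    intro j _
    by_cases hji : j = i
    · subst hji; by_cases hr : j % n = r <;> simp [hr, coeff_C_mul, coeff_X_pow]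
    · by_cases hr : j % n = r <;>
        simp [hr, coeff_C_mul, coeff_X_pow, Ne.symm hji, hji]
  rw [Finset.sum_congr rfl h, Finset.sum_ite_eq' (Finset.range (p.natDegree + 1)) i]
  by_cases hi : i ∈ Finset.range (p.natDegree + 1)
  · simp [hi]
  · simp only [hi, if_neg, if_false]
    have : p.coeff i = 0 := p.coeff_eq_zero_of_natDegree_lt (by
      simpa using Nat.lt_of_succ_le (Nat.not_lt.mp (by simpa [Finset.mem_range] using hi)))
    simp [this]

lemma shiftPow (n : ℕ) [NeZero n] (j : ℕ) :
    (Matrix.of fun i c : Fin n => if c = i + 1 then (1:ℝ) else 0) ^ j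
    = Matrix.of fun i c => if c = i + (j : Fin n) then 1 else 0 := by
  induction j with
  | zero =>
    ext i c
    simp [Matrix.one_apply, eq_comm]
  | succ j ih =>
    rw [pow_succ, ih]
    ext i c
    rw [Matrix.mul_apply]
    simp only [Matrix.of_apply, ite_mul, one_mul, zero_mul, mul_ite, mul_one, mul_zero]
    have : ∀ x : Fin n, x ∈ Finset.univ →
        (if c = x + 1 then if x = i + (j : Fin n) then (1:ℝ) else 0 else 0)
        = (if x = i + (j : Fin n) then (if c = x + 1 then (1:ℝ) else 0) else 0) := by
      intro x _
      by_cases h1 : c = x + 1 <;> by_cases h2 : x = i + (j:Fin n) <;> simp [h1, h2]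
    rw [Finset.sum_congr rfl this, Finset.sum_ite_eq' Finset.univ (i + (j : Fin n))]
    simp [add_assoc]

theorem stmt_10 (n : ℕ) (p : Polynomial ℝ) (hp : Pn n p) (hd : n < p.natDegree) :
    ∀ k, 1 ≤ k → k ≤ n → 0 ≤ p.coeff (p.natDegree - n + k) := by
  intro k hk1 hkn
  have hn : 0 < n := lt_of_lt_of_le hk1 hkn
  haveI : NeZero n := ⟨hn.ne'⟩
  set m := p.natDegree with hm
  set J := m - n + k with hJdef
  have hnm : n ≤ m := hd.le
  have hJm : J ≤ m := by omega
  have hJ1 : 1 ≤ J := by omega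
  set P := (Matrix.of fun i c : Fin n => if c = i + 1 then (1:ℝ) else 0) with hP
  have key : ∀ t : ℝ, 0 ≤ t → 0 ≤ (rpart p n (J % n)).eval t := by
    intro t ht
    have hA : ∀ i j, 0 ≤ (t • P) i j := by
      intro i j
      simp only [Matrix.smul_apply, smul_eq_mul, Matrix.of_apply, hP]
      split_ifs <;> simp [ht]
    have h0 := hp (t • P) hA 0 (J : Fin n)
    rw [Polynomial.aeval_eq_sum_range] at h0
    have heval : (∑ j ∈ Finset.range (m + 1), p.coeff j • (t • P) ^ j) 0 (J : Fin n)
        = (rpart p n (J % n)).eval t := by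
      unfold rpart
      rw [Polynomial.eval_finset_sum, Matrix.sum_apply]
      refine Finset.sum_congr rfl fun j _ => ?_
      rw [_root_.smul_pow, hP, shiftPow]
      have hcond : ((J : Fin n) = 0 + (j : Fin n)) ↔ (j % n = J % n) := by
        rw [zero_add, Fin.ext_iff, Fin.val_natCast, Fin.val_natCast, eq_comm]
      by_cases hc : j % n = J % n
      · rw [if_pos hc]
        simp only [Matrix.smul_apply, Matrix.of_apply, smul_eq_mul]
        rw [if_pos (hcond.mpr hc)]
        rw [Polynomial.eval_mul, Polynomial.eval_C, Polynomial.eval_pow, Polynomial.eval_X]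
        ring
      · rw [if_neg hc]
        simp only [Matrix.smul_apply, Matrix.of_apply, smul_eq_mul]
        rw [if_neg (fun h => hc (hcond.mp h))]
        simp
    rw [heval] at h0
    exact h0
  by_contra hneg
  push_neg at hneg
  set q := rpart p n (J % n) with hq
  have hqJ : q.coeff J = p.coeff J := by rw [hq, rpart_coeff]; simp
  have hq0 : q ≠ 0 := fun h => by
    rw [h, Polynomial.coeff_zero] at hqJ
    exact absurd hqJ.symm (ne_of_lt hneg)
  have hdegle : q.natDegree ≤ J := by
    rw [Polynomial.natDegree_le_iff_coeff_eq_zero]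
    intro N hN
    rw [hq, rpart_coeff]
    split_ifs with h
    · apply p.coeff_eq_zero_of_natDegree_lt
      by_contra hNm
      push_neg at hNm
      have hdvd : n ∣ N - J := (Nat.modEq_iff_dvd' hN.le).mp h.symm
      have hge := Nat.le_of_dvd (by omega) hdvd
      omega
    · rfl
  have hdeg : q.natDegree = J :=
    le_antisymm hdegle (Polynomial.le_natDegree_of_ne_zero (by rw [hqJ]; exact hneg.ne))
  have hlc : q.leadingCoeff = p.coeff J := by rw [Polynomial.leadingCoeff, hdeg, hqJ]
  have hdpos : 0 < q.degree := by
    rw [Polynomial.degree_eq_natDegree hq0, hdeg]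
    exact_mod_cast hJ1
  have htb := Polynomial.tendsto_atBot_of_leadingCoeff_nonpos q hdpos (by rw [hlc]; exact hneg.le)
  obtain ⟨t, ht⟩ := ((htb.eventually (Filter.eventually_le_atBot (-1))).and
    (Filter.eventually_ge_atTop 0)).exists
  linarith [key t ht.2, ht.1]
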